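/- (Orthogonality propagation with carrier reordering) Let L ≥ 0, ρ > 0, and let a_1, …, a_N ∈ ℂ^{L+1} be pairwise orthogonal vectors with ‖a_j‖² = L+1 for all j. Let X ∈ ℂ^N, set P_0 = I_{L+1}, and for 1 ≤ i ≤ N define recursively γ(i) = 1 / (1 + ρ |X_i|² · a_i^H P_{i−1} a_i) and P_i = P_{i−1} − ρ · γ(i) · |X_i|² · P_{i−1} a_i a_i^H P_{i−1}. Then for all 1 ≤ i ≤ N: γ(i) = 1 / (1 + ρ |X_i|² (L+1)), and for every k with i < k ≤ N one has P_i a_k = a_k. -/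

import Mathlib

open Matrix

open Matrix in
lemma aux {n : ℕ} (w v x : Fin n → ℂ) : Matrix.vecMulVec w v *ᵥ x = (v ⬝ᵥ x) • w := by
  funext i
  simp [Matrix.vecMulVec, Matrix.mulVec, dotProduct, Finset.mul_sum, mul_assoc, mul_comm, mul_left_comm]


/-- Orthogonality propagation with carrier reordering: if the vectors
`a_1, …, a_N ∈ ℂ^{L+1}` are pairwise orthogonal with `‖a_j‖² = L+1`, `P_0 = I`, and
`γ(i) = 1/(1 + ρ|X_i|² a_iᴴ P_{i−1} a_i)`,
`P_i = P_{i−1} − ρ γ(i) |X_i|² P_{i−1} a_i a_iᴴ P_{i−1}` for `1 ≤ i ≤ N`, then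
`γ(i) = 1/(1 + ρ|X_i|²(L+1))` for all `1 ≤ i ≤ N`, and `P_i a_k = a_k` whenever
`i < k ≤ N`. -/
theorem stmt13 {L N : ℕ} (ρ : ℝ) (hρ : 0 < ρ)
    (a : Fin N → (Fin (L + 1) → ℂ))
    (horth : ∀ j k : Fin N, j ≠ k → star (a j) ⬝ᵥ a k = 0)
    (hnorm : ∀ j : Fin N, star (a j) ⬝ᵥ a j = ((L : ℂ) + 1))
    (X : Fin N → ℂ)
    (P : ℕ → Matrix (Fin (L + 1)) (Fin (L + 1)) ℂ) (hP0 : P 0 = 1)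
    (γ : ℕ → ℝ)
    (hγ : ∀ i : Fin N, γ ((i : ℕ) + 1) =
      1 / (1 + ρ * ‖X i‖ ^ 2 * (star (a i) ⬝ᵥ (P (i : ℕ) *ᵥ a i)).re))
    (hPrec : ∀ i : Fin N, P ((i : ℕ) + 1) = P (i : ℕ) -
      ((ρ * γ ((i : ℕ) + 1) * ‖X i‖ ^ 2 : ℝ) : ℂ) •
        (P (i : ℕ) * vecMulVec (a i) (star (a i)) * P (i : ℕ))) :
    ∀ i : Fin N,
      γ ((i : ℕ) + 1) = 1 / (1 + ρ * ‖X i‖ ^ 2 * ((L : ℝ) + 1)) ∧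
      ∀ k : Fin N, (i : ℕ) < (k : ℕ) → P ((i : ℕ) + 1) *ᵥ a k = a k := by

  have key : ∀ i : ℕ, ∀ k : Fin N, i ≤ (k : ℕ) → P i *ᵥ a k = a k := by
    intro i
    induction i with
    | zero => intro k _; simp [hP0]
    | succ i ih =>
      intro k hk
      have hiN : i < N := lt_of_lt_of_le (Nat.lt_of_succ_le hk) k.isLt.le
      set fi : Fin N := ⟨i, hiN⟩ with hfi
      have hne : fi ≠ k := by
        intro h
        have h2 : i = (k : ℕ) := congrArg Fin.val h
        omega
      have hPi := hPrec fi
      simp only [hfi, Fin.val_mk] at hPi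
      rw [hPi, sub_mulVec, smul_mulVec, Matrix.mul_assoc, ← mulVec_mulVec,
        ← mulVec_mulVec, ih k (Nat.le_of_succ_le hk), aux, horth fi k hne]
      simp
  intro i
  have hPa : P (i : ℕ) *ᵥ a i = a i := key i i le_rfl
  constructor
  · rw [hγ i, hPa, hnorm i]
    norm_num
  · intro k hk
    exact key ((i : ℕ) + 1) k hk
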